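/- Let X, Y be sets and c : X × Y → ℝ ∪ {+∞} a cost function. Every c-path-bounded set Γ ⊆ X × Y is c-cyclically monotone. -/

import Mathlib

/-- A set `Γ ⊆ X × Y` is `c`-cyclically monotone, for a cost `c : X × Y → ℝ ∪ {+∞}`. -/
def CCyclicallyMonotone {X Y : Type*} (c : X → Y → EReal) (Γ : Set (X × Y)) : Prop :=
  ∀ (k : ℕ) (p : Fin k → X × Y), (∀ i, p i ∈ Γ) →
    ∀ σ : Equiv.Perm (Fin k),
      ∑ i, c (p i).1 (p i).2 ≤ ∑ i, c (p i).1 (p (σ i)).2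

/-- The sum `c(x,y) − c(x₁,y) + ∑_{i=1}^{m−1} (c(xᵢ,yᵢ) − c(x_{i+1},yᵢ)) + c(x_m,y_m) − c(z,y_m)`
along a path `f` (with `m+1` intermediate points) from `p = (x,y)` to `q = (z,w)`. -/
noncomputable def pathSum {X Y : Type*} (c : X → Y → EReal) (p q : X × Y) {m : ℕ}
    (f : Fin (m + 1) → X × Y) : EReal :=
  (c p.1 p.2 - c (f 0).1 p.2)
    + ∑ i : Fin m, (c (f i.castSucc).1 (f i.castSucc).2 - c (f i.succ).1 (f i.castSucc).2)
    + (c (f (Fin.last m)).1 (f (Fin.last m)).2 - c q.1 (f (Fin.last m)).2)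

/-- A set `Γ ⊆ X × Y` is `c`-path-bounded. -/
def CPathBounded {X Y : Type*} (c : X → Y → EReal) (Γ : Set (X × Y)) : Prop :=
  (∀ p ∈ Γ, c p.1 p.2 < ⊤) ∧
    ∀ p ∈ Γ, ∀ q ∈ Γ, ∃ M : ℝ, ∀ (m : ℕ) (f : Fin (m + 1) → X × Y),
      (∀ i, f i ∈ Γ) → pathSum c p q f ≤ (M : EReal)

noncomputable def erealCoeHom : ℝ →+ EReal := ⟨⟨(fun r => (r : EReal)), EReal.coe_zero⟩, EReal.coe_add⟩

lemma ereal_coe_sum {α : Type*} (s : Finset α) (f : α → ℝ) :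
    (↑(∑ i ∈ s, f i) : EReal) = ∑ i ∈ s, (↑(f i) : EReal) :=
  map_sum erealCoeHom f s

lemma ereal_sum_ne_bot {α : Type*} (s : Finset α) (f : α → EReal)
    (h : ∀ i ∈ s, f i ≠ ⊥) : ∑ i ∈ s, f i ≠ ⊥ := by
  classical
  induction s using Finset.induction_on with
  | empty => simp
  | @insert a s hx ih =>
      rw [Finset.sum_insert hx, Ne, EReal.add_eq_bot_iff]
      push_neg
      exact ⟨h _ (Finset.mem_insert_self _ _), ih fun i hi => h i (Finset.mem_insert_of_mem hi)⟩

lemma ereal_sum_eq_bot {α : Type*} (s : Finset α) (f : α → EReal) {i : α}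
    (hi : i ∈ s) (h : f i = ⊥) : ∑ j ∈ s, f j = ⊥ := by
  classical
  rw [← Finset.add_sum_erase s f hi, h, EReal.bot_add]

lemma ereal_sum_eq_top {α : Type*} (s : Finset α) (f : α → EReal) {i : α}
    (hi : i ∈ s) (h : f i = ⊤) (hb : ∀ j ∈ s, f j ≠ ⊥) : ∑ j ∈ s, f j = ⊤ := by
  classical
  rw [← Finset.add_sum_erase s f hi, h, EReal.top_add_of_ne_bot]
  exact ereal_sum_ne_bot _ _ fun j hj => hb j (Finset.mem_of_mem_erase hj)

lemma ereal_sub_self {x : EReal} (ht : x ≠ ⊤) (hb : x ≠ ⊥) : x - x = 0 := by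
  rw [← EReal.coe_toReal ht hb, ← EReal.coe_sub, sub_self, EReal.coe_zero]

/-- Every `c`-path-bounded set is `c`-cyclically monotone. -/
theorem cCyclicallyMonotone_of_cPathBounded
    {X Y : Type*} (c : X → Y → EReal) (Γ : Set (X × Y))
    (h : CPathBounded c Γ) : CCyclicallyMonotone c Γ := by
  obtain ⟨hfin, hbd⟩ := h
  intro k p hp σ
  by_contra hle
  push_neg at hle
  set τ : Equiv.Perm (Fin k) := σ⁻¹ with hτ
  set d : Fin k → EReal := fun i => c (p i).1 (p i).2 with hd
  set e : Fin k → EReal := fun i => c (p (τ i)).1 (p i).2 with he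
  have hre : ∑ i, c (p i).1 (p (σ i)).2 = ∑ i, e i := by
    rw [← Equiv.sum_comp τ (fun i => c (p i).1 (p (σ i)).2)]
    refine Finset.sum_congr rfl fun i _ => ?_
    simp [he, hτ, Equiv.Perm.inv_def, Equiv.apply_symm_apply]
  rw [hre] at hle
  have hdt : ∀ i, d i ≠ ⊤ := fun i => (hfin (p i) (hp i)).ne
  have hsd : (∑ i, d i) ≠ ⊥ := (bot_le.trans_lt hle).ne'
  have hdb : ∀ i, d i ≠ ⊥ := fun i hb => hsd (ereal_sum_eq_bot _ _ (Finset.mem_univ i) hb)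
  by_cases hbot : ∃ i, e i = ⊥
  · obtain ⟨i, hib⟩ := hbot
    obtain ⟨M, hM⟩ := hbd (p i) (hp i) (p (τ i)) (hp (τ i))
    have hfΓ : ∀ j : Fin 2, (![p i, p (τ i)] : Fin 2 → X × Y) j ∈ Γ := by
      intro j
      fin_cases j
      · exact hp i
      · exact hp (τ i)
    have hps : pathSum c (p i) (p (τ i)) ![p i, p (τ i)] = ⊤ := by
      have hb1 : c (p i).1 (p i).2 - c (p (τ i)).1 (p i).2 = ⊤ := by
        have : c (p (τ i)).1 (p i).2 = (⊥ : EReal) := hib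
        rw [this]
        exact EReal.sub_bot (hdb i)
      have h0 : c (p i).1 (p i).2 - c (p i).1 (p i).2 = 0 := ereal_sub_self (hdt i) (hdb i)
      have h1 : c (p (τ i)).1 (p (τ i)).2 - c (p (τ i)).1 (p (τ i)).2 = 0 :=
        ereal_sub_self (hdt (τ i)) (hdb (τ i))
      show (c (p i).1 (p i).2 - c (p i).1 (p i).2)
          + (∑ j : Fin 1, (c (p i).1 (p i).2 - c (p (τ i)).1 (p i).2))
          + (c (p (τ i)).1 (p (τ i)).2 - c (p (τ i)).1 (p (τ i)).2) = ⊤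
      rw [Fin.sum_univ_one, h0, h1, hb1, zero_add, add_zero]
    have hcon := hM 1 ![p i, p (τ i)] hfΓ
    rw [hps] at hcon
    exact (EReal.coe_lt_top M).not_ge hcon
  push_neg at hbot
  have hset : (∑ i, e i) ≠ ⊤ := by
    intro ht
    rw [ht] at hle
    exact (lt_irrefl _ (lt_of_lt_of_le hle le_top))
  have het : ∀ i, e i ≠ ⊤ := fun i hit =>
    hset (ereal_sum_eq_top _ _ (Finset.mem_univ i) hit fun j _ => hbot j)
  set D : Fin k → ℝ := fun i => (d i).toReal with hD
  set E : Fin k → ℝ := fun i => (e i).toReal with hE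
  have hDd : ∀ i, d i = ((D i : ℝ) : EReal) := fun i => (EReal.coe_toReal (hdt i) (hdb i)).symm
  have hEe : ∀ i, e i = ((E i : ℝ) : EReal) := fun i => (EReal.coe_toReal (het i) (hbot i)).symm
  have hlt' : ∑ i, E i < ∑ i, D i := by
    rw [← EReal.coe_lt_coe_iff, ereal_coe_sum, ereal_coe_sum]
    calc ∑ i, ((E i : ℝ) : EReal) = ∑ i, e i := by
            exact Finset.sum_congr rfl fun i _ => (hEe i).symm
      _ < ∑ i, d i := hle
      _ = ∑ i, ((D i : ℝ) : EReal) := Finset.sum_congr rfl fun i _ => hDd i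
  set g : Fin k → ℝ := fun i => D i - E i with hg
  have hgpos : 0 < ∑ i, g i := by
    have : ∑ i, g i = ∑ i, D i - ∑ i, E i := by
      simp only [hg, Finset.sum_sub_distrib]
    rw [this]
    linarith
  set n := orderOf τ with hn
  have hnpos : 0 < n := orderOf_pos τ
  have hτn : τ ^ n = 1 := pow_orderOf_eq_one τ
  set G : Fin k → ℝ := fun i => ∑ j ∈ Finset.range n, g ((τ ^ j) i) with hG
  have key : ∀ (i : Fin k) (N : ℕ),
      ∑ j ∈ Finset.range (N * n), g ((τ ^ j) i) = N * G i := by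
    intro i N
    induction N with
    | zero => simp
    | succ N ih =>
        rw [Nat.succ_mul, Finset.sum_range_add, ih]
        have hper : ∀ j : ℕ, (τ ^ (N * n + j)) i = (τ ^ j) i := by
          intro j
          rw [pow_add, mul_comm N n, pow_mul, hτn, one_pow, one_mul]
        simp only [hper]
        have : ∑ j ∈ Finset.range n, g ((τ ^ j) i) = G i := by rw [hG]
        rw [this]
        push_cast
        ring
  have hGle : ∀ i, G i ≤ 0 := by
    intro i
    by_contra hpos
    push_neg at hpos
    obtain ⟨M, hM⟩ := hbd (p i) (hp i) (p i) (hp i)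
    obtain ⟨N, hN⟩ := exists_nat_gt (M / G i)
    have hMN : M < (N : ℝ) * G i := by
      rw [div_lt_iff₀ hpos] at hN
      linarith
    set f : Fin (N * n + 1) → X × Y := fun j => p ((τ ^ (j : ℕ)) i) with hf
    have hfΓ : ∀ j, f j ∈ Γ := fun j => hp _
    have hm1 : τ ^ (N * n) = 1 := by rw [mul_comm, pow_mul, hτn, one_pow]
    have hf0 : f 0 = p i := by
      simp only [hf, Fin.val_zero, pow_zero, Equiv.Perm.coe_one, id_eq]
    have hflast : f (Fin.last (N * n)) = p i := by
      simp only [hf, Fin.val_last, hm1, Equiv.Perm.coe_one, id_eq]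
    have hps : pathSum c (p i) (p i) f = (((N : ℝ) * G i : ℝ) : EReal) := by
      unfold pathSum
      rw [hf0, hflast]
      have h0 : c (p i).1 (p i).2 - c (p i).1 (p i).2 = 0 := ereal_sub_self (hdt i) (hdb i)
      have hmid : ∀ j : Fin (N * n),
          c (f j.castSucc).1 (f j.castSucc).2 - c (f j.succ).1 (f j.castSucc).2
            = ((g ((τ ^ (j : ℕ)) i) : ℝ) : EReal) := by
        intro j
        have h1 : f j.castSucc = p ((τ ^ (j : ℕ)) i) := by
          simp only [hf, Fin.coe_castSucc]
        have h2 : f j.succ = p (τ ((τ ^ (j : ℕ)) i)) := by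
          simp only [hf, Fin.val_succ, pow_succ', Equiv.Perm.mul_apply]
        rw [h1, h2]
        have hdw : c (p ((τ ^ (j : ℕ)) i)).1 (p ((τ ^ (j : ℕ)) i)).2
            = ((D ((τ ^ (j : ℕ)) i) : ℝ) : EReal) := hDd _
        have hew : c (p (τ ((τ ^ (j : ℕ)) i))).1 (p ((τ ^ (j : ℕ)) i)).2
            = ((E ((τ ^ (j : ℕ)) i) : ℝ) : EReal) := hEe _
        rw [hdw, hew, ← EReal.coe_sub]
      rw [Finset.sum_congr rfl fun j _ => hmid j]
      rw [Fin.sum_univ_eq_sum_range (fun j => ((g ((τ ^ j) i) : ℝ) : EReal)) (N * n)]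
      rw [← ereal_coe_sum, key i N, h0, zero_add, add_zero]
    have hcon := hM (N * n) f hfΓ
    rw [hps] at hcon
    exact hMN.not_ge (EReal.coe_le_coe_iff.mp hcon)
  have hGsum : ∑ i, G i = (n : ℝ) * ∑ i, g i := by
    simp only [hG]
    rw [Finset.sum_comm]
    have : ∀ j ∈ Finset.range n, ∑ i, g ((τ ^ j) i) = ∑ i, g i := fun j _ =>
      Equiv.sum_comp (τ ^ j) g
    rw [Finset.sum_congr rfl this, Finset.sum_const, Finset.card_range, nsmul_eq_mul]
  have hpos : (0 : ℝ) < ∑ i, G i := by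
    rw [hGsum]
    positivity
  exact hpos.not_ge (Finset.sum_nonpos fun i _ => hGle i)
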